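/- The twisted group algebra F^σ T admits a degree-inverting involution if and only if [σ]² = 1 in H²(T, F^×). -/

import Mathlib

/-- A 2-cocycle on `T` with values in `Fˣ` (trivial action). -/
def IsCocycle {T : Type*} [Group T] {F : Type*} [Field F] (σ : T → T → Fˣ) : Prop :=
  ∀ u v w : T, σ u v * σ (u * v) w = σ u (v * w) * σ v w

/-- The twisted product on `F^σ T = T →₀ F`, determined on the basis by
`X_u * X_v = σ(u,v) X_{uv}`. -/
noncomputable def twistedMul {T : Type*} [Group T] {F : Type*} [Field F]
    (σ : T → T → Fˣ) (f g : T →₀ F) : T →₀ F :=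
  f.sum fun u a => g.sum fun v b => Finsupp.single (u * v) (a * b * (σ u v : F))

/-- A degree-inverting involution of `F^σ T`: an `F`-linear bijection which is an
anti-automorphism, squares to the identity, and maps the homogeneous component of
degree `u` (the span of `X_u`) into the component of degree `u⁻¹`. -/
def IsDegInvInvolution {T : Type*} [Group T] {F : Type*} [Field F]
    (σ : T → T → Fˣ) (ρ : (T →₀ F) ≃ₗ[F] (T →₀ F)) : Prop :=
  (∀ f g : T →₀ F, ρ (twistedMul σ f g) = twistedMul σ (ρ g) (ρ f)) ∧
  (∀ f : T →₀ F, ρ (ρ f) = f) ∧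
  (∀ (u : T) (a : F), ∃ c : F, ρ (Finsupp.single u a) = Finsupp.single u⁻¹ c)

section Aux
variable {T : Type*} [Group T] {F : Type*} [Field F] (σ : T → T → Fˣ)

lemma twistedMul_single (u v : T) (a b : F) :
    twistedMul σ (Finsupp.single u a) (Finsupp.single v b)
      = Finsupp.single (u * v) (a * b * (σ u v : F)) := by
  unfold twistedMul
  rw [Finsupp.sum_single_index, Finsupp.sum_single_index] <;> simp

lemma twistedMul_zero_left (g : T →₀ F) : twistedMul σ 0 g = 0 := by simp [twistedMul]

lemma twistedMul_zero_right (f : T →₀ F) : twistedMul σ f 0 = 0 := by simp [twistedMul]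

lemma twistedMul_add_left (f f' g : T →₀ F) :
    twistedMul σ (f + f') g = twistedMul σ f g + twistedMul σ f' g := by
  unfold twistedMul
  rw [Finsupp.sum_add_index']
  · intro u; simp
  · intro u a a'
    rw [← Finsupp.sum_add]
    congr 1; ext v b
    rw [add_mul, add_mul, Finsupp.single_add]

lemma twistedMul_add_right (f g g' : T →₀ F) :
    twistedMul σ f (g + g') = twistedMul σ f g + twistedMul σ f g' := by
  unfold twistedMul
  rw [← Finsupp.sum_add]
  congr 1; ext u a
  rw [Finsupp.sum_add_index']
  · intro v; simp
  · intro v b b'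
    rw [mul_add, add_mul, Finsupp.single_add]

lemma cocycle_star (hσ : IsCocycle σ) (hnorm : ∀ u : T, σ u 1 = 1 ∧ σ 1 u = 1)
    (u v : T) :
    σ u v * σ (u*v) (u*v)⁻¹ * σ v⁻¹ u⁻¹ = σ u u⁻¹ * σ v v⁻¹ := by
  have A := hσ u v (u*v)⁻¹
  rw [show v * (u*v)⁻¹ = u⁻¹ by group] at A
  have B := hσ v v⁻¹ u⁻¹
  rw [show v * v⁻¹ = (1:T) by group, (hnorm u⁻¹).2, mul_one,
    show v⁻¹ * u⁻¹ = (u*v)⁻¹ from (mul_inv_rev u v).symm] at B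
  rw [A, mul_assoc, ← B]

lemma cocycle_starF (hσ : IsCocycle σ) (hnorm : ∀ u : T, σ u 1 = 1 ∧ σ 1 u = 1)
    (u v : T) :
    (σ u v : F) * (σ (u*v) (u*v)⁻¹ : F) * (σ v⁻¹ u⁻¹ : F)
      = (σ u u⁻¹ : F) * (σ v v⁻¹ : F) := by
  have := congrArg Units.val (cocycle_star σ hσ hnorm u v)
  push_cast at this
  exact this

/-- The linear map `X_u ↦ c u • X_{u⁻¹}`. -/
noncomputable def rhoMap (c : T → F) : (T →₀ F) →ₗ[F] (T →₀ F) :=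
  Finsupp.lsum F fun u => c u • Finsupp.lsingle u⁻¹

lemma rhoMap_single (c : T → F) (u : T) (a : F) :
    rhoMap c (Finsupp.single u a) = Finsupp.single u⁻¹ (c u * a) := by
  simp [rhoMap, Finsupp.smul_single]

lemma rhoMap_invol (c : T → F) (h : ∀ u : T, c u⁻¹ * c u = 1) :
    (rhoMap (F := F) c).comp (rhoMap c) = LinearMap.id := by
  apply Finsupp.lhom_ext
  intro u a
  rw [LinearMap.comp_apply, rhoMap_single, rhoMap_single, inv_inv, ← mul_assoc, h u,
    one_mul, LinearMap.id_coe, id_eq]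

lemma rhoMap_anti (c : T → F)
    (key : ∀ u v : T, c (u*v) * (σ u v : F) = c u * c v * (σ v⁻¹ u⁻¹ : F))
    (f g : T →₀ F) :
    rhoMap c (twistedMul σ f g) = twistedMul σ (rhoMap c g) (rhoMap c f) := by
  have single_case : ∀ (u : T) (a : F) (g : T →₀ F),
      rhoMap c (twistedMul σ (Finsupp.single u a) g)
        = twistedMul σ (rhoMap c g) (rhoMap c (Finsupp.single u a)) := by
    intro u a g
    refine Finsupp.induction g ?_ ?_
    · simp [twistedMul_zero_right, twistedMul_zero_left]
    · intro v b g' _ _ ih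
      rw [twistedMul_add_right, map_add, ih, map_add, twistedMul_add_left]
      congr 1
      rw [twistedMul_single, rhoMap_single, rhoMap_single, rhoMap_single,
        twistedMul_single, show (u*v)⁻¹ = v⁻¹ * u⁻¹ from mul_inv_rev u v]
      congr 1
      linear_combination (a * b) * key u v
  refine Finsupp.induction f ?_ ?_
  · simp [twistedMul_zero_left, twistedMul_zero_right]
  · intro u a f' _ _ ih
    rw [twistedMul_add_left, map_add, ih, map_add, twistedMul_add_right, single_case]

end Aux

/-- `F^σ T` admits a degree-inverting involution if and only if `[σ]² = 1` in `H²(T,Fˣ)`,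
i.e. `σ²` is a coboundary. -/
theorem exists_degInvInvolution_iff_class_sq_eq_one
    {T : Type*} [Group T] [Finite T] {F : Type*} [Field F]
    (σ : T → T → Fˣ) (hσ : IsCocycle σ)
    (hnorm : ∀ u : T, σ u 1 = 1 ∧ σ 1 u = 1) :
    (∃ ρ : (T →₀ F) ≃ₗ[F] (T →₀ F), IsDegInvInvolution σ ρ) ↔
    (∃ μ : T → Fˣ, ∀ u v : T, σ u v * σ u v = μ u * μ v * (μ (u * v))⁻¹) := by
  have hstarF := cocycle_starF (F := F) σ hσ hnorm
  constructor
  · rintro ⟨ρ, h1, h2, h3⟩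
    choose c hc using fun u : T => h3 u 1
    have hρa : ∀ (u : T) (a : F),
        ρ (Finsupp.single u a) = Finsupp.single u⁻¹ (c u * a) := by
      intro u a
      rw [show (Finsupp.single u a : T →₀ F) = a • Finsupp.single u 1 by
          rw [Finsupp.smul_single, smul_eq_mul, mul_one],
        map_smul, hc, Finsupp.smul_single, smul_eq_mul, mul_comm]
    have hcc : ∀ u : T, c u⁻¹ * c u = 1 := by
      intro u
      have h := h2 (Finsupp.single u (1:F))
      rw [hc, hρa, inv_inv] at h
      simpa using congrArg (fun f : T →₀ F => f u) h
    have hcne : ∀ u : T, c u ≠ 0 := by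
      intro u h0
      have := hcc u
      rw [h0, mul_zero] at this
      exact one_ne_zero this.symm
    have hrel : ∀ u v : T, (σ u v : F) * c (u*v) = c v * c u * (σ v⁻¹ u⁻¹ : F) := by
      intro u v
      have h := h1 (Finsupp.single u (1:F)) (Finsupp.single v (1:F))
      rw [twistedMul_single, hρa, hc, hc, twistedMul_single,
        show (u*v)⁻¹ = v⁻¹ * u⁻¹ from mul_inv_rev u v] at h
      have h' := congrArg (fun f : T →₀ F => f (v⁻¹ * u⁻¹)) h
      simp only [Finsupp.single_eq_same] at h'
      linear_combination h'
    refine ⟨fun u => σ u u⁻¹ * Units.mk0 (c u) (hcne u), fun u v => ?_⟩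
    apply Units.ext
    push_cast
    have ne1 : ((σ (u*v) (u*v)⁻¹ : Fˣ) : F) ≠ 0 := Units.ne_zero _
    field_simp [hcne (u*v)]
    simp only [Units.val_mk0]
    linear_combination ((σ u v : F) * ((σ (u*v) (u*v)⁻¹ : Fˣ) : F)) * hrel u v
      + (c u * c v) * hstarF u v
  · rintro ⟨μ, hμ⟩
    have hμ1 : μ 1 = 1 := by
      have h := hμ 1 1
      simp only [mul_one, one_mul, mul_inv_cancel_right] at h
      rw [(hnorm 1).1, one_mul] at h
      exact h.symm
    have hμF : ∀ u v : T, (σ u v : F) * (σ u v : F) * (μ (u*v) : F)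
        = (μ u : F) * (μ v : F) := by
      intro u v
      have h : σ u v * σ u v * μ (u*v) = μ u * μ v := by
        rw [hμ u v, inv_mul_cancel_right]
      exact_mod_cast congrArg Units.val h
    set c : T → F := fun u => (μ u : F) * ((σ u u⁻¹ : F))⁻¹ with hcdef
    have hcne : ∀ u : T, c u ≠ 0 := fun u =>
      mul_ne_zero (Units.ne_zero _) (inv_ne_zero (Units.ne_zero _))
    have key : ∀ u v : T, c (u*v) * (σ u v : F) = c u * c v * (σ v⁻¹ u⁻¹ : F) := by
      intro u v
      have ne1 : ((σ (u*v) (u*v)⁻¹ : Fˣ) : F) ≠ 0 := Units.ne_zero _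
      have ne2 : ((σ u u⁻¹ : Fˣ) : F) ≠ 0 := Units.ne_zero _
      have ne3 : ((σ v v⁻¹ : Fˣ) : F) ≠ 0 := Units.ne_zero _
      rw [hcdef]
      field_simp
      linear_combination (((σ (u*v) (u*v)⁻¹ : Fˣ) : F) * ((σ v⁻¹ u⁻¹ : Fˣ) : F)) * hμF u v
        - ((μ (u*v) : F) * ((σ u v : Fˣ) : F)) * hstarF u v
    have hc1 : c 1 = 1 := by
      rw [hcdef]
      simp [hμ1, (hnorm 1).1]
    have hccinv : ∀ u : T, c u⁻¹ * c u = 1 := by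
      intro u
      have h := key u u⁻¹
      rw [show u * u⁻¹ = (1:T) by group, hc1, one_mul, inv_inv] at h
      have hne : ((σ u u⁻¹ : Fˣ) : F) ≠ 0 := Units.ne_zero _
      have h2 : (c u⁻¹ * c u) * ((σ u u⁻¹ : Fˣ) : F)
          = 1 * ((σ u u⁻¹ : Fˣ) : F) := by linear_combination -h
      exact mul_right_cancel₀ hne h2
    have hm := rhoMap_invol c hccinv
    refine ⟨LinearEquiv.ofLinear (rhoMap c) (rhoMap c) hm hm, ?_, ?_, ?_⟩
    · intro f g
      simp only [LinearEquiv.ofLinear_apply]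
      exact rhoMap_anti σ c key f g
    · intro f
      simp only [LinearEquiv.ofLinear_apply]
      exact DFunLike.congr_fun hm f
    · intro u a
      exact ⟨c u * a, by simp only [LinearEquiv.ofLinear_apply]; exact rhoMap_single c u a⟩
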